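/- Regard 𝓔 as a function of θ with d_ij and d_jk held fixed. Then for all θ ∈ (0, π), d𝓔/dθ = m_k m_i (−H²/I_H² + 1/d_ki³) d_ij d_jk sin θ. -/

import Mathlib

/-- Third side from the law of cosines. -/
noncomputable def dki (dij djk θ : ℝ) : ℝ :=
  Real.sqrt (dij ^ 2 + djk ^ 2 - 2 * dij * djk * Real.cos θ)

/-- Moment of inertia about the rotation axis. -/
noncomputable def IH (mi mj mk IS dij djk θ : ℝ) : ℝ :=
  mi * mj * dij ^ 2 + mj * mk * djk ^ 2 + mk * mi * (dki dij djk θ) ^ 2 + IS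

/-- The amended potential `𝓔 = H²/(2 I_H) + U` as a function of
`(d_ij, d_jk, θ)`. -/
noncomputable def amended (mi mj mk IS H dij djk θ : ℝ) : ℝ :=
  H ^ 2 / (2 * IH mi mj mk IS dij djk θ)
    - (mi * mj / dij + mj * mk / djk + mk * mi / dki dij djk θ)

/-- First variation of the amended potential in the angle `θ`:
`d𝓔/dθ = m_k m_i (−H²/I_H² + 1/d_ki³) d_ij d_jk sin θ`. -/
theorem amended_deriv_theta
    (mi mj mk IS H dij djk : ℝ)
    (hmi : 0 < mi) (hmj : 0 < mj) (hmk : 0 < mk) (hIS : 0 < IS) (hH : 0 ≤ H)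
    (hdij : 0 < dij) (hdjk : 0 < djk) :
    ∀ θ ∈ Set.Ioo 0 Real.pi,
      deriv (fun t => amended mi mj mk IS H dij djk t) θ =
        mk * mi * (-(H ^ 2) / (IH mi mj mk IS dij djk θ) ^ 2 +
            1 / (dki dij djk θ) ^ 3) * dij * djk * Real.sin θ := by
  intro θ hθ
  obtain ⟨hθ0, hθπ⟩ := hθ
  have hcos : Real.cos θ < 1 := by
    have := Real.cos_lt_cos_of_nonneg_of_le_pi le_rfl hθπ.le hθ0
    simpa using this
  set Q : ℝ → ℝ := fun t => dij ^ 2 + djk ^ 2 - 2 * dij * djk * Real.cos t with hQdef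
  have hQpos : 0 < Q θ := by
    have h1 : 0 < dij * djk := mul_pos hdij hdjk
    simp only [hQdef]
    nlinarith [sq_nonneg (dij - djk)]
  have hQnonneg : ∀ t, 0 ≤ Q t := by
    intro t
    have := Real.cos_le_one t
    simp only [hQdef]
    nlinarith [sq_nonneg (dij - djk), mul_pos hdij hdjk]
  set s := Real.sqrt (Q θ) with hs
  have hspos : 0 < s := Real.sqrt_pos.mpr hQpos
  have hs2 : s ^ 2 = Q θ := Real.sq_sqrt hQpos.le
  have hQ' : HasDerivAt Q (2 * dij * djk * Real.sin θ) θ := by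
    have h := (Real.hasDerivAt_cos θ).const_mul (2 * dij * djk)
    have h2 := (hasDerivAt_const θ (dij ^ 2 + djk ^ 2)).sub h
    exact h2.congr_deriv (by ring)
  have hdk : HasDerivAt (fun t => dki dij djk t)
      (2 * dij * djk * Real.sin θ / (2 * s)) θ := by
    have := hQ'.sqrt hQpos.ne'
    simpa [dki, hs] using this
  have hdkθ : dki dij djk θ = s := rfl
  -- IH as function of Q
  have hIHfun : (fun t => IH mi mj mk IS dij djk t) =
      fun t => mi * mj * dij ^ 2 + mj * mk * djk ^ 2 + mk * mi * Q t + IS := by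
    funext t
    simp only [IH, dki, hQdef]
    rw [Real.sq_sqrt (hQnonneg t)]
  have hIH' : HasDerivAt (fun t => IH mi mj mk IS dij djk t)
      (mk * mi * (2 * dij * djk * Real.sin θ)) θ := by
    rw [hIHfun]
    exact (((hasDerivAt_const θ (mi * mj * dij ^ 2 + mj * mk * djk ^ 2)).add
      (hQ'.const_mul (mk * mi))).add_const IS).congr_deriv (by ring)
  have hIHθ : IH mi mj mk IS dij djk θ =
      mi * mj * dij ^ 2 + mj * mk * djk ^ 2 + mk * mi * Q θ + IS := by
    exact congrFun hIHfun θ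
  have hIHpos : 0 < IH mi mj mk IS dij djk θ := by
    rw [hIHθ]
    have := mul_pos (mul_pos hmk hmi) hQpos
    positivity
  have h2IH : HasDerivAt (fun t => 2 * IH mi mj mk IS dij djk t)
      (2 * (mk * mi * (2 * dij * djk * Real.sin θ))) θ := hIH'.const_mul 2
  have hnum : HasDerivAt (fun t => H ^ 2 / (2 * IH mi mj mk IS dij djk t))
      ((0 * (2 * IH mi mj mk IS dij djk θ) -
        H ^ 2 * (2 * (mk * mi * (2 * dij * djk * Real.sin θ)))) /
        (2 * IH mi mj mk IS dij djk θ) ^ 2) θ :=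
    (hasDerivAt_const θ (H ^ 2)).div h2IH (by positivity)
  have hlast : HasDerivAt (fun t => mk * mi / dki dij djk t)
      ((0 * dki dij djk θ - mk * mi * (2 * dij * djk * Real.sin θ / (2 * s))) /
        (dki dij djk θ) ^ 2) θ :=
    (hasDerivAt_const θ (mk * mi)).div hdk (by rw [hdkθ]; exact hspos.ne')
  have hfull : HasDerivAt (fun t => amended mi mj mk IS H dij djk t)
      ((0 * (2 * IH mi mj mk IS dij djk θ) -
        H ^ 2 * (2 * (mk * mi * (2 * dij * djk * Real.sin θ)))) /
        (2 * IH mi mj mk IS dij djk θ) ^ 2 -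
        (0 + ((0 * dki dij djk θ - mk * mi * (2 * dij * djk * Real.sin θ / (2 * s))) /
          (dki dij djk θ) ^ 2))) θ := by
    have := hnum.sub ((hasDerivAt_const θ (mi * mj / dij + mj * mk / djk)).add hlast)
    simpa [amended, Pi.sub_def, Pi.add_def] using this
  rw [hfull.deriv, hdkθ]
  have hIHne : IH mi mj mk IS dij djk θ ≠ 0 := hIHpos.ne'
  field_simp
  ring
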